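/- For the self-similar solution inside the 1-rarefaction fan of the ten-moment equations, given left state (ρ_L,u₁,L,p₁₁,L) with c_L=√(3p₁₁,L/ρ_L), the functions ρ(ξ) = (ρ_L/2)(1 + (u₁,L − ξ)/c_L), u₁(ξ) = (c_L + u₁,L + ξ)/2, p₁₁(ξ) = (p₁₁,L/8)(1 + (u₁,L−ξ)/c_L)³ satisfy: (i) u₁(ξ) − c(ξ) = ξ where c(ξ)=√(3p₁₁(ξ)/ρ(ξ)), and (ii) p₁₁(ξ)/ρ(ξ)³ = p₁₁,L/ρ_L³, for all ξ in (u₁,L − c_L, u₁,* − c_{*L}) where ρ(ξ)>0. -/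
import Mathlib


/-- Inside the 1-rarefaction fan: the fan is traced by the λ₁ = u₁ − c
characteristic through the origin, and S₁ = p₁₁/ρ³ is invariant. -/
theorem rarefaction_fan_selfsimilar (ρL u₁L p₁₁L u₁s csL : ℝ)
    (hρ : 0 < ρL) (hp : 0 < p₁₁L) :
    let cL := Real.sqrt (3 * p₁₁L / ρL)
    let ρf : ℝ → ℝ := fun ξ => ρL / 2 * (1 + (u₁L - ξ) / cL)
    let u₁f : ℝ → ℝ := fun ξ => (cL + u₁L + ξ) / 2
    let p₁₁f : ℝ → ℝ := fun ξ => p₁₁L / 8 * (1 + (u₁L - ξ) / cL) ^ 3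
    ∀ ξ : ℝ, ξ ∈ Set.Ioo (u₁L - cL) (u₁s - csL) → 0 < ρf ξ →
      (u₁f ξ - Real.sqrt (3 * p₁₁f ξ / ρf ξ) = ξ ∧
       p₁₁f ξ / (ρf ξ) ^ 3 = p₁₁L / ρL ^ 3) := by
  intro cL ρf u₁f p₁₁f ξ hξ hρf
  have hcL : 0 < cL := Real.sqrt_pos.mpr (by positivity)
  have hc2 : cL ^ 2 = 3 * p₁₁L / ρL := Real.sq_sqrt (by positivity)
  have hc2' : cL ^ 2 * ρL = 3 * p₁₁L := by
    field_simp at hc2; linarith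
  simp only [ρf, u₁f, p₁₁f] at hρf ⊢
  set a := 1 + (u₁L - ξ) / cL with ha
  have hapos : 0 < a := by
    by_contra h
    push_neg at h
    nlinarith [mul_nonpos_of_nonneg_of_nonpos (by linarith : (0:ℝ) ≤ ρL / 2) h]
  constructor
  · have h1 : 3 * (p₁₁L / 8 * a ^ 3) / (ρL / 2 * a) = (cL * a / 2) ^ 2 := by
      rw [div_eq_iff (by positivity)]
      linear_combination (-(a ^ 3) / 8) * hc2'
    rw [h1, Real.sqrt_sq (by positivity), ha]
    field_simp
    ring
  · field_simp
    ring
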